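/- Let G be an infinite torsion abelian group that contains no subgroup isomorphic to the Prüfer group ℤ(p^∞) for any prime p. Then there exists a sequence of primes p_1, p_2, p_3, … such that G contains a subgroup isomorphic to the infinite direct sum ⊕_{i=1}^{∞} ℤ/p_iℤ. -/

import Mathlib

lemma aux_iInter_nonempty {α : Type*} (C : ℕ → Set α) (hfin : (C 0).Finite)
    (hant : ∀ k, C (k+1) ⊆ C k) (hne : ∀ k, (C k).Nonempty) :
    (⋂ k, C k).Nonempty := by
  have hmono : ∀ {i j : ℕ}, i ≤ j → C j ⊆ C i := by
    intro i j hij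
    induction hij with
    | refl => exact subset_rfl
    | step h ih => exact fun x hx => ih (hant _ hx)
  have hfins : ∀ k, (C k).Finite := fun k => hfin.subset (hmono (Nat.zero_le k))
  set N := Function.argmin (fun k => (C k).ncard) with hNdef
  have hNmin : ∀ k, (C N).ncard ≤ (C k).ncard := fun k =>
    Function.argmin_le (fun k => (C k).ncard) k
  obtain ⟨x, hx⟩ := hne N
  refine ⟨x, Set.mem_iInter.2 fun k => ?_⟩
  rcases le_total k N with h | h
  · exact hmono h hx
  · have : C k = C N := Set.eq_of_subset_of_ncard_le (hmono h) (hNmin k) (hfins N)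
    exact this ▸ hx


lemma aux_closure_finite {G : Type*} [AddCommGroup G] (htor : AddMonoid.IsTorsion G)
    {s : Set G} (hs : s.Finite) : ((AddSubgroup.closure s : AddSubgroup G) : Set G).Finite := by
  refine Set.Finite.induction_on (motive := fun s _ => ((AddSubgroup.closure s : AddSubgroup G) : Set G).Finite) s hs ?_ ?_
  · simp [AddSubgroup.closure_empty]
  · intro a t _ _ ih
    rw [← Set.singleton_union, AddSubgroup.closure_union]
    have h1 : ((AddSubgroup.closure {a} : AddSubgroup G) : Set G).Finite := by
      rw [← AddSubgroup.zmultiples_eq_closure]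
      exact (htor a).finite_zmultiples
    have hsub : ((AddSubgroup.closure {a} ⊔ AddSubgroup.closure t : AddSubgroup G) : Set G)
        ⊆ Set.image2 (· + ·) (AddSubgroup.closure {a} : Set G) (AddSubgroup.closure t : Set G) := by
      intro x hx
      obtain ⟨y, hy, z, hz, rfl⟩ := AddSubgroup.mem_sup.1 hx
      exact ⟨y, hy, z, hz, rfl⟩
    exact ((h1.image2 _ ih)).subset hsub


lemma aux_torsion_finite {G : Type*} [AddCommGroup G]
    (hsoc : {x : G | (addOrderOf x).Prime}.Finite) :
    ∀ n : ℕ, 0 < n → {x : G | n • x = 0}.Finite := by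
  intro n
  induction n using Nat.strong_induction_on with
  | _ n ih =>
  intro hn
  rcases eq_or_lt_of_le (Nat.succ_le_of_lt hn) with h1 | h1
  · have : {x : G | 1 • x = 0} ⊆ {(0 : G)} := by
      intro x hx; simpa using hx
    exact (Set.finite_singleton 0).subset (h1 ▸ this)
  -- n ≥ 2
  set q := n.minFac with hq
  have hqp : q.Prime := Nat.minFac_prime (by omega)
  set m := n / q with hm
  have hqm : q * m = n := Nat.mul_div_cancel' n.minFac_dvd
  rcases eq_or_ne m 1 with hm1 | hm1
  · -- n = q prime
    have hnq : n = q := by rw [← hqm, hm1, mul_one]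
    have : {x : G | n • x = 0} ⊆ insert (0:G) {x : G | (addOrderOf x).Prime} := by
      intro x hx
      rcases eq_or_ne x 0 with rfl | hx0
      · exact Set.mem_insert _ _
      · refine Set.mem_insert_iff.2 (Or.inr ?_)
        have : addOrderOf x = q := by
          haveI : Fact q.Prime := ⟨hqp⟩
          exact addOrderOf_eq_prime (hnq ▸ hx) hx0
        simpa [this] using hqp
    exact (hsoc.insert 0).subset this
  · have hm2 : 2 ≤ m := by
      rcases Nat.lt_or_ge m 2 with h | h
      · interval_cases m
        · omega
        · omega
      · exact h
    have hmn : m < n := by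
      have := hqp.two_le
      calc m < q * m := by nlinarith
        _ = n := hqm
    have hqn : q < n := by nlinarith
    have hTm := ih m hmn (by omega)
    have hTq := ih q hqn hqp.pos
    classical
    set c : G → G := fun s => if h : ∃ y : G, m • y = s then Classical.choose h else 0 with hc
    have hcspec : ∀ x : G, m • c (m • x) = m • x := by
      intro x
      have h : ∃ y : G, m • y = m • x := ⟨x, rfl⟩
      simp only [hc, dif_pos h]
      exact Classical.choose_spec h
    set f : G → G × G := fun x => (x - c (m • x), m • x) with hf
    have hmaps : f '' {x : G | n • x = 0} ⊆ {x : G | m • x = 0} ×ˢ {x : G | q • x = 0} := by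
      rintro - ⟨x, hx, rfl⟩
      constructor
      · show m • (x - c (m • x)) = 0
        rw [smul_sub, hcspec, sub_self]
      · show q • (m • x) = 0
        rw [← mul_smul, hqm]
        exact hx
    have hinj : Set.InjOn f {x : G | n • x = 0} := by
      intro x _ y _ hxy
      have h2 : m • x = m • y := congrArg Prod.snd hxy
      have h1 : x - c (m • x) = y - c (m • y) := congrArg Prod.fst hxy
      rw [h2] at h1
      linear_combination (norm := abel) h1
    exact Set.Finite.of_finite_image ((hTm.prod hTq).subset hmaps) hinj


lemma aux_unbounded_prime_pow {G : Type*} [AddCommGroup G] [Infinite G]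
    (htor : AddMonoid.IsTorsion G)
    (hsoc : {x : G | (addOrderOf x).Prime}.Finite)
    (hTfin : ∀ n : ℕ, 0 < n → {x : G | n • x = 0}.Finite) :
    ∃ p : ℕ, p.Prime ∧ ∀ k : ℕ, ∃ x : G, addOrderOf x = p ^ k := by
  classical
  set P : Finset ℕ := hsoc.toFinset.image addOrderOf with hP
  have hPprime : ∀ q ∈ P, q.Prime := by
    intro q hq
    simp only [hP, Finset.mem_image, Set.Finite.mem_toFinset, Set.mem_setOf_eq] at hq
    obtain ⟨x, hx, rfl⟩ := hq
    exact hx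
  have hordpos : ∀ x : G, 0 < addOrderOf x := fun x => (htor x).addOrderOf_pos
  have hdvd_mem : ∀ (x : G) (q : ℕ), q.Prime → q ∣ addOrderOf x → q ∈ P := by
    intro x q hq hdvd
    have hy : addOrderOf ((addOrderOf x / q) • x) = q :=
      addOrderOf_nsmul_addOrderOf_sub (hordpos x).ne' hdvd
    simp only [hP, Finset.mem_image, Set.Finite.mem_toFinset, Set.mem_setOf_eq]
    refine ⟨_, ?_, hy⟩
    rw [hy]; exact hq
  by_contra hcon
  push_neg at hcon
  -- for each prime p, a bound k with no element of order p ^ k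
  have hbound : ∀ q : ℕ, q.Prime → ∃ k : ℕ, ∀ x : G, ¬ (q ^ k ∣ addOrderOf x) := by
    intro q hq
    obtain ⟨k, hk⟩ := hcon q hq
    refine ⟨k, fun x hdvd => ?_⟩
    obtain ⟨y, hy⟩ : ∃ y : G, addOrderOf y = q ^ k := by
      refine ⟨(addOrderOf x / q ^ k) • x, addOrderOf_nsmul_addOrderOf_sub (hordpos x).ne' hdvd⟩
    exact hk y hy
  choose kk hkk using fun q (hq : Nat.Prime q) => hbound q hq
  -- uniform bound
  set K : ℕ := (P.sup fun q => if h : q.Prime then kk q h else 0) with hK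
  set N : ℕ := ∏ q ∈ P, q ^ K with hN
  have hNpos : 0 < N := Finset.prod_pos fun q hq => pow_pos (hPprime q hq).pos _
  have hdvdN : ∀ x : G, addOrderOf x ∣ N := by
    intro x
    rw [← Nat.factorization_le_iff_dvd (hordpos x).ne' hNpos.ne']
    intro q
    rcases em q.Prime with hq | hq
    · rcases em (q ∈ P) with hqP | hqP
      · have h1 : (addOrderOf x).factorization q < kk q hq := by
          by_contra h
          push_neg at h
          exact hkk q hq x ((Nat.Prime.pow_dvd_iff_le_factorization hq (hordpos x).ne').2 h)
        have h2 : kk q hq ≤ K := by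
          rw [hK]
          have := Finset.le_sup (f := fun q => if h : q.Prime then kk q h else 0) hqP
          simpa [hq] using this
        have h3 : N.factorization q = K := by
          rw [Nat.factorization_prod (S := P) (g := fun q => q ^ K)
            (fun p hp => (pow_pos (hPprime p hp).pos K).ne')]
          rw [Finset.sum_apply']
          rw [Finset.sum_eq_single q]
          · simp [hq.factorization_pow]
          · intro b hb hbq
            simp [Nat.Prime.factorization_pow (hPprime b hb), Finsupp.single_apply, hbq]
          · intro h; exact absurd hqP h
        omega
      · have hnd : ¬ q ∣ addOrderOf x := fun hd => hqP (hdvd_mem x q hq hd)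
        simp [Nat.factorization_eq_zero_of_not_dvd hnd]
    · simp [Nat.factorization_eq_zero_of_not_prime _ hq]
  have : {x : G | N • x = 0} = Set.univ := by
    ext x
    simp only [Set.mem_setOf_eq, Set.mem_univ, iff_true]
    rw [← addOrderOf_dvd_iff_nsmul_eq_zero]
    exact hdvdN x
  exact Set.infinite_univ (this ▸ (hTfin N hNpos))

/-- The Prüfer group `ℤ(p^∞)`: the subgroup of the circle `ℝ/ℤ` consisting of the
`p`-power torsion elements. -/
noncomputable def prufer (p : ℕ) : AddSubgroup (AddCircle (1 : ℝ)) where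
  carrier := {x | ∃ k : ℕ, (p : ℤ) ^ k • x = 0}
  zero_mem' := ⟨0, smul_zero _⟩
  add_mem' := by
    rintro x y ⟨k, hk⟩ ⟨l, hl⟩
    refine ⟨k + l, ?_⟩
    have hx : (p : ℤ) ^ (k + l) • x = 0 := by
      rw [pow_add, mul_comm, mul_smul, hk, smul_zero]
    have hy : (p : ℤ) ^ (k + l) • y = 0 := by
      rw [pow_add, mul_smul, hl, smul_zero]
    rw [smul_add, hx, hy, add_zero]
  neg_mem' := by
    rintro x ⟨k, hk⟩
    exact ⟨k, by rw [smul_neg, hk, neg_zero]⟩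



lemma aux_prufer {G : Type*} [AddCommGroup G] (p : ℕ) (hp : p.Prime)
    (horders : ∀ k : ℕ, ∃ x : G, addOrderOf x = p ^ k)
    (hTfin : ∀ n : ℕ, 0 < n → {x : G | n • x = 0}.Finite) :
    ∃ H : AddSubgroup G, Nonempty (H ≃+ ↥(prufer p)) := by
  classical
  haveI : Fact p.Prime := ⟨hp⟩
  haveI hfact1 : Fact ((0:ℝ) < 1) := ⟨one_pos⟩
  set D : ℕ → G → Prop := fun k x => ∃ y : G, p ^ k • y = x with hD
  have hDanti : ∀ k x, D (k+1) x → D k x := by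
    rintro k x ⟨y, hy⟩
    exact ⟨p • y, by rw [← mul_smul, ← pow_succ]; exact hy⟩
  have hDmono : ∀ {k l : ℕ}, k ≤ l → ∀ x, D l x → D k x := by
    intro k l hkl
    induction hkl with
    | refl => exact fun x h => h
    | step h ih => exact fun x hx => ih x (hDanti _ x hx)
  have hTp := hTfin p hp.pos
  -- Step 1: find a nonzero element of order p divisible by every power of p
  obtain ⟨x₁, hx₁⟩ : (⋂ k, {x : G | p • x = 0 ∧ x ≠ 0 ∧ D k x}).Nonempty := by
    apply aux_iInter_nonempty
    · exact hTp.subset fun x hx => hx.1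
    · exact fun k x hx => ⟨hx.1, hx.2.1, hDanti k x hx.2.2⟩
    · intro k
      obtain ⟨z, hz⟩ := horders (k+1)
      refine ⟨p ^ k • z, ?_, ?_, ⟨z, rfl⟩⟩
      · rw [← mul_smul, ← pow_succ', ← hz]
        exact addOrderOf_nsmul_eq_zero z
      · have : addOrderOf (p ^ k • z) = p := by
          have := addOrderOf_nsmul_of_dvd (x := z) (n := p ^ k)
            (pow_ne_zero _ hp.pos.ne') (by rw [hz]; exact pow_dvd_pow p k.le_succ)
          rw [this, hz, pow_succ, Nat.mul_div_cancel_left p (pow_pos hp.pos k)]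
        intro h0
        rw [h0, addOrderOf_zero] at this
        exact hp.one_lt.ne' this.symm
  simp only [Set.mem_iInter, Set.mem_setOf_eq] at hx₁
  have hx₁0 : p • x₁ = 0 := (hx₁ 0).1
  have hx₁ne : x₁ ≠ 0 := (hx₁ 0).2.1
  have hx₁D : ∀ k, D k x₁ := fun k => (hx₁ k).2.2
  -- Step 2: divisibility step inside the "infinitely divisible" part
  have step : ∀ x : G, (∀ k, D k x) → ∃ z : G, p • z = x ∧ ∀ k, D k z := by
    intro x hx
    have hne : ∀ k, {z : G | p • z = x ∧ D k z}.Nonempty := by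
      intro k
      obtain ⟨y, hy⟩ := hx (k+1)
      exact ⟨p ^ k • y, by rw [← mul_smul, ← pow_succ']; exact hy, ⟨y, rfl⟩⟩
    obtain ⟨z₀, hz₀⟩ := hne 0
    have hfin0 : {z : G | p • z = x ∧ D 0 z}.Finite := by
      have hsub : {z : G | p • z = x ∧ D 0 z} ⊆ (z₀ + ·) '' {w : G | p • w = 0} := by
        intro z hz
        refine ⟨z - z₀, ?_, by show z₀ + (z - z₀) = z; abel⟩
        show p • (z - z₀) = 0
        rw [smul_sub, hz.1, hz₀.1, sub_self]
      exact (hTp.image _).subset hsub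
    obtain ⟨z, hz⟩ := aux_iInter_nonempty (fun k => {z : G | p • z = x ∧ D k z}) hfin0
      (fun k z hz => ⟨hz.1, hDanti k z hz.2⟩) hne
    simp only [Set.mem_iInter, Set.mem_setOf_eq] at hz
    exact ⟨z, (hz 0).1, fun k => (hz k).2⟩
  -- Step 3: the divisible chain y
  have hT : ∀ t : {z : G // ∀ k, D k z}, ∃ t' : {z : G // ∀ k, D k z}, p • (t' : G) = t := by
    rintro ⟨x, hx⟩
    obtain ⟨z, hz1, hz2⟩ := step x hx
    exact ⟨⟨z, hz2⟩, hz1⟩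
  choose next hnext using hT
  set Y : ℕ → {z : G // ∀ k, D k z} := fun n => Nat.rec ⟨x₁, hx₁D⟩ (fun _ t => next t) n with hY
  set y : ℕ → G := fun n => (Y n : G) with hy
  have hy0 : y 0 = x₁ := rfl
  have hystep : ∀ n, p • y (n+1) = y n := fun n => hnext (Y n)
  -- orders
  have hord : ∀ n, addOrderOf (y n) = p ^ (n + 1) := by
    intro n
    induction n with
    | zero =>
      rw [pow_one, hy0]
      exact addOrderOf_eq_prime hx₁0 hx₁ne
    | succ n ih =>
      refine addOrderOf_eq_prime_pow ?_ ?_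
      · intro h
        have : p ^ n • y n = 0 := by
          rw [← hystep n, ← mul_smul, ← pow_succ]
          exact h
        rw [← addOrderOf_dvd_iff_nsmul_eq_zero, ih] at this
        exact absurd (Nat.pow_dvd_pow_iff_le_right hp.one_lt |>.1 this) (by omega)
      · rw [pow_succ, mul_smul, hystep n, ← ih]
        exact addOrderOf_nsmul_eq_zero _
  -- chain for y
  have hchain : ∀ k n : ℕ, p ^ k • y (n + k) = y n := by
    intro k
    induction k with
    | zero => intro n; simp
    | succ k ih =>
      intro n
      show p ^ (k+1) • y ((n + k) + 1) = y n
      rw [pow_succ, mul_smul, hystep (n+k), ih n]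
  -- the Prüfer side
  have hpR : ((p : ℝ)) ≠ 0 := Nat.cast_ne_zero.2 hp.pos.ne'
  set u : ℕ → AddCircle (1:ℝ) :=
    fun k => ((((1:ℕ) : ℝ) / ((p ^ (k+1) : ℕ) : ℝ) * (1:ℝ) : ℝ) : AddCircle (1:ℝ)) with hudef
  have hordu : ∀ k, addOrderOf (u k) = p ^ (k+1) := fun k =>
    AddCircle.addOrderOf_div_of_gcd_eq_one (pow_pos hp.pos _) (Nat.gcd_one_left _)
  have hustep : ∀ k, p • u (k+1) = u k := by
    intro k
    rw [hudef]
    show p • (((((1:ℕ) : ℝ) / ((p ^ (k+2) : ℕ) : ℝ) * (1:ℝ)) : ℝ) : AddCircle (1:ℝ)) = _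
    rw [← AddCircle.coe_nsmul]
    congr 1
    rw [nsmul_eq_mul]
    push_cast
    rw [pow_succ]
    field_simp
  have huchain : ∀ k n : ℕ, p ^ k • u (n + k) = u n := by
    intro k
    induction k with
    | zero => intro n; simp
    | succ k ih =>
      intro n
      show p ^ (k+1) • u ((n + k) + 1) = u n
      rw [pow_succ, mul_smul, hustep (n+k), ih n]
  have humem : ∀ k, u k ∈ prufer p := by
    intro k
    refine ⟨k+1, ?_⟩
    have h1 : (p ^ (k+1) : ℕ) • u k = 0 := by
      rw [← hordu k]; exact addOrderOf_nsmul_eq_zero _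
    have h2 : ((p:ℤ)) ^ (k+1) = ((p ^ (k+1) : ℕ) : ℤ) := by push_cast; ring
    rw [h2, natCast_zsmul]
    exact h1
  -- order comparison
  have W : ∀ (a : ℤ) (k : ℕ), a • y k = 0 ↔ a • u k = 0 := by
    intro a k
    rw [← addOrderOf_dvd_iff_zsmul_eq_zero, ← addOrderOf_dvd_iff_zsmul_eq_zero,
      hord, hordu]
  set c : ℕ → ℤ := fun j => ((p ^ j : ℕ) : ℤ) with hcdef
  have hyz : ∀ (a : ℤ) (n M : ℕ), n ≤ M → a • y n = (a * c (M - n)) • y M := by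
    intro a n M hnM
    have e : n + (M - n) = M := by omega
    calc a • y n = a • ((p ^ (M-n) : ℕ) • y M) := by rw [← hchain (M-n) n, e]
    _ = a • (c (M-n) • y M) := by rw [hcdef]; rw [natCast_zsmul]
    _ = (a * c (M-n)) • y M := by rw [smul_smul]
  have huz : ∀ (a : ℤ) (n M : ℕ), n ≤ M → a • u n = (a * c (M - n)) • u M := by
    intro a n M hnM
    have e : n + (M - n) = M := by omega
    calc a • u n = a • ((p ^ (M-n) : ℕ) • u M) := by rw [← huchain (M-n) n, e]
    _ = a • (c (M-n) • u M) := by rw [hcdef]; rw [natCast_zsmul]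
    _ = (a * c (M-n)) • u M := by rw [smul_smul]
  have W2 : ∀ (a b : ℤ) (n m : ℕ), a • y n = b • y m → a • u n = b • u m := by
    have aux : ∀ (a b : ℤ) (n m : ℕ), n ≤ m → a • y n = b • y m → a • u n = b • u m := by
      intro a b n m hnm h
      rw [hyz a n m hnm] at h
      rw [huz a n m hnm]
      have h0 : (a * c (m - n) - b) • y m = 0 := by
        rw [sub_smul, h, sub_self]
      have h1 := (W _ m).1 h0
      rw [sub_smul, sub_eq_zero] at h1
      exact h1
    intro a b n m h
    rcases le_total n m with hnm | hmn
    · exact aux a b n m hnm h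
    · exact (aux b a m n hmn h.symm).symm
  -- the subgroup H
  set H : AddSubgroup G :=
    { carrier := {h : G | ∃ (n : ℕ) (a : ℤ), a • y n = h}
      zero_mem' := ⟨0, 0, zero_zsmul _⟩
      add_mem' := by
        rintro w₁ w₂ ⟨n, a, rfl⟩ ⟨m, b, rfl⟩
        refine ⟨max n m, a * c (max n m - n) + b * c (max n m - m), ?_⟩
        rw [add_smul, ← hyz a n _ (le_max_left n m), ← hyz b m _ (le_max_right n m)]
      neg_mem' := by
        rintro w ⟨n, a, rfl⟩
        exact ⟨n, -a, by rw [neg_smul]⟩ } with hHdef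
  have hmemH : ∀ (h : H), ∃ (n : ℕ) (a : ℤ), a • y n = (h : G) := fun h => h.2
  choose nn aa haa using hmemH
  set F : H → ↥(prufer p) :=
    fun h => ⟨aa h • u (nn h), AddSubgroup.zsmul_mem _ (humem (nn h)) _⟩ with hFdef
  have hFadd : ∀ h₁ h₂ : H, F (h₁ + h₂) = F h₁ + F h₂ := by
    intro h₁ h₂
    apply Subtype.ext
    show aa (h₁+h₂) • u (nn (h₁+h₂)) = aa h₁ • u (nn h₁) + aa h₂ • u (nn h₂)
    set n := nn h₁; set m := nn h₂; set r := nn (h₁+h₂)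
    set a := aa h₁; set b := aa h₂; set d := aa (h₁+h₂)
    set M := max n (max m r) with hM
    have hnM : n ≤ M := le_max_left _ _
    have hmM : m ≤ M := le_trans (le_max_left _ _) (le_max_right _ _)
    have hrM : r ≤ M := le_trans (le_max_right _ _) (le_max_right _ _)
    have hsum : d • y r = (a * c (M - n) + b * c (M - m)) • y M := by
      rw [add_smul, ← hyz a n M hnM, ← hyz b m M hmM, haa h₁, haa h₂, haa (h₁+h₂)]
      rfl
    have := W2 _ _ _ _ hsum
    rw [this, add_smul, ← huz a n M hnM, ← huz b m M hmM]
  set Fhom : H →+ ↥(prufer p) := AddMonoidHom.mk' F hFadd with hFhom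
  have hinj : Function.Injective Fhom := by
    refine (injective_iff_map_eq_zero Fhom).2 ?_
    intro h hF
    have h1 : aa h • u (nn h) = 0 := by
      have := congrArg (Subtype.val) hF
      exact this
    have h2 : aa h • y (nn h) = 0 := (W _ _).2 h1
    rw [haa h] at h2
    exact Subtype.ext h2
  have hsurj : Function.Surjective Fhom := by
    intro v
    obtain ⟨k, hk⟩ := v.2
    have hnk : (p ^ k : ℕ) • (v : AddCircle (1:ℝ)) = 0 := by
      have h2 : ((p:ℤ)) ^ k = ((p ^ k : ℕ) : ℤ) := by push_cast; ring
      rw [h2, natCast_zsmul] at hk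
      exact hk
    have hdvd : addOrderOf (v : AddCircle (1:ℝ)) ∣ p ^ k :=
      addOrderOf_dvd_of_nsmul_eq_zero hnk
    obtain ⟨j, hjk, hordv⟩ := (Nat.dvd_prime_pow hp).1 hdvd
    rcases Nat.eq_zero_or_pos j with rfl | hj
    · refine ⟨0, ?_⟩
      have : (v : AddCircle (1:ℝ)) = 0 := by
        rw [pow_zero] at hordv
        exact AddMonoid.addOrderOf_eq_one_iff.1 hordv
      rw [map_zero]
      exact (Subtype.ext this).symm
    · obtain ⟨i, rfl⟩ : ∃ i, j = i + 1 := ⟨j - 1, by omega⟩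
      obtain ⟨m, hmlt, hgcd, hmk⟩ :=
        (AddCircle.addOrderOf_eq_pos_iff (pow_pos hp.pos (i+1))).1 hordv
      set h : H := ⟨(m : ℤ) • y i, ⟨i, m, rfl⟩⟩ with hh
      refine ⟨h, ?_⟩
      apply Subtype.ext
      show aa h • u (nn h) = (v : AddCircle (1:ℝ))
      have h1 : aa h • y (nn h) = (m : ℤ) • y i := haa h
      have h2 := W2 _ _ _ _ h1
      rw [h2]
      rw [← hmk, hudef]
      show (m:ℤ) • ((((1:ℕ) : ℝ) / ((p ^ (i+1) : ℕ) : ℝ) * (1:ℝ) : ℝ) : AddCircle (1:ℝ)) = _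
      rw [← AddCircle.coe_zsmul]
      congr 1
      rw [zsmul_eq_mul]
      push_cast
      ring
  exact ⟨H, ⟨(AddEquiv.ofBijective Fhom ⟨hinj, hsurj⟩)⟩⟩

open DirectSum

/-- An infinite torsion abelian group containing no copy of any Prüfer group `ℤ(p^∞)`
contains a subgroup isomorphic to an infinite direct sum `⊕ᵢ ℤ/pᵢℤ` of cyclic groups of
prime order. -/
theorem statement11 (G : Type*) [AddCommGroup G] [Infinite G]
    (htor : AddMonoid.IsTorsion G)
    (hnp : ∀ q : ℕ, q.Prime → ∀ H : AddSubgroup G, IsEmpty (H ≃+ ↥(prufer q))) :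
    ∃ p : ℕ → ℕ, (∀ i, (p i).Prime) ∧
      ∃ H : AddSubgroup G, Nonempty (H ≃+ ⨁ i : ℕ, ZMod (p i)) := by
  classical
  -- KEY: outside any finite subset's closure there is an element of prime order
  have key : ∀ s : Finset G, ∃ z : G,
      (addOrderOf z).Prime ∧ z ∉ AddSubgroup.closure (s : Set G) := by
    intro s
    by_contra hcon
    push_neg at hcon
    have hsoc : {z : G | (addOrderOf z).Prime}.Finite :=
      (aux_closure_finite htor s.finite_toSet).subset fun z hz => hcon z hz
    have hTfin := aux_torsion_finite hsoc
    obtain ⟨q, hq, horders⟩ := aux_unbounded_prime_pow htor hsoc hTfin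
    obtain ⟨H, ⟨e⟩⟩ := aux_prufer q hq horders hTfin
    exact (hnp q hq H).false e
  choose pick hpick1 hpick2 using key
  -- recursively build an independent family of elements of prime order
  set S : ℕ → Finset G := fun n => Nat.rec ∅ (fun _ s => insert (pick s) s) n with hS
  set x : ℕ → G := fun n => pick (S n) with hxdef
  have hSsucc : ∀ n, S (n+1) = insert (x n) (S n) := fun n => rfl
  have hSmono : ∀ {m n : ℕ}, m ≤ n → S m ⊆ S n := by
    intro m n h
    induction h with
    | refl => exact subset_rfl
    | step h ih =>
      refine ih.trans ?_
      rw [hSsucc]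
      exact Finset.subset_insert _ _
  set p : ℕ → ℕ := fun n => addOrderOf (x n) with hpdef
  have hprime : ∀ n, (p n).Prime := fun n => hpick1 (S n)
  have hxS : ∀ {m n : ℕ}, m < n → x m ∈ S n := fun {m n} h =>
    hSmono h (by rw [hSsucc]; exact Finset.mem_insert_self _ _)
  have hnotin : ∀ n, x n ∉ AddSubgroup.closure ((S n : Set G)) := fun n => hpick2 (S n)
  -- the component homs
  have hpx : ∀ i, ((zmultiplesHom G) (x i)) ((p i : ℤ)) = 0 := by
    intro i
    show ((p i : ℤ)) • x i = 0
    rw [natCast_zsmul]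
    exact addOrderOf_nsmul_eq_zero _
  set f : ∀ i : ℕ, ZMod (p i) →+ G :=
    fun i => ZMod.lift (p i) ⟨(zmultiplesHom G) (x i), hpx i⟩ with hfdef
  have hfz : ∀ (i : ℕ) (a : ℤ), f i ((a : ZMod (p i))) = a • x i := by
    intro i a
    rw [hfdef]
    rw [ZMod.lift_coe]
    rfl
  have hfrange : ∀ (i : ℕ) (g : ZMod (p i)), ∃ a : ℤ, (a : ZMod (p i)) = g ∧ f i g = a • x i := by
    intro i g
    obtain ⟨a, rfl⟩ := ZMod.intCast_surjective g
    exact ⟨a, rfl, hfz i a⟩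
  have hdvd_iff : ∀ (i : ℕ) (a : ℤ), a • x i = 0 ↔ ((p i : ℤ)) ∣ a := by
    intro i a
    rw [← addOrderOf_dvd_iff_zsmul_eq_zero]
  have hfinj : ∀ (i : ℕ) (g : ZMod (p i)), f i g = 0 → g = 0 := by
    intro i g hg
    obtain ⟨a, rfl, ha2⟩ := hfrange i g
    rw [ha2] at hg
    rw [ZMod.intCast_zmod_eq_zero_iff_dvd]
    exact (hdvd_iff i a).1 hg
  -- independence
  have key2 : ∀ s : Finset ℕ, ∀ g : (∀ i, ZMod (p i)),
      (∑ i ∈ s, f i (g i)) = 0 → ∀ i ∈ s, g i = 0 := by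
    intro s
    induction s using Finset.induction_on_max with
    | empty => exact fun g _ i hi => absurd hi (Finset.notMem_empty i)
    | insert a s hlt ih =>
      intro g hsum i hi
      have hanotmem : a ∉ s := fun h => lt_irrefl a (hlt a h)
      rw [Finset.sum_insert hanotmem] at hsum
      have hSsum : ∑ j ∈ s, f j (g j) ∈ AddSubgroup.closure ((S a : Set G)) := by
        refine AddSubgroup.sum_mem _ fun j hj => ?_
        obtain ⟨b, _, hb2⟩ := hfrange j (g j)
        rw [hb2]
        exact AddSubgroup.zsmul_mem _ (AddSubgroup.subset_closure (hxS (hlt j hj))) _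
      have hw : f a (g a) ∈ AddSubgroup.closure ((S a : Set G)) := by
        have : f a (g a) = -∑ j ∈ s, f j (g j) := by
          rw [eq_neg_iff_add_eq_zero]; exact hsum
        rw [this]
        exact AddSubgroup.neg_mem _ hSsum
      have h0 : f a (g a) = 0 := by
        by_contra h0
        obtain ⟨b, hb1, hb2⟩ := hfrange a (g a)
        have hpb : ¬ ((p a : ℤ) ∣ b) := by
          intro hd
          exact h0 (by rw [hb2]; exact (hdvd_iff a b).2 hd)
        have hcop : IsCoprime b ((p a : ℤ)) := by
          rw [Int.isCoprime_iff_gcd_eq_one]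
          have h1 : Nat.Coprime (p a) b.natAbs :=
            (hprime a).coprime_iff_not_dvd.2
              (fun hd => hpb (Int.dvd_natAbs.1 (Int.natCast_dvd_natCast.2 hd)))
          have h2 : Int.gcd b ((p a : ℤ)) = b.natAbs.gcd (p a) := by
            rw [Int.gcd]
            simp
          rw [h2]
          exact h1.symm
        obtain ⟨u, v, huv⟩ := hcop
        have hxa : x a ∈ AddSubgroup.closure ((S a : Set G)) := by
          have : x a = u • (b • x a) + v • (((p a : ℤ)) • x a) := by
            rw [smul_smul, smul_smul, ← add_smul, huv, one_smul]
          rw [this, (hdvd_iff a (p a)).2 dvd_rfl, smul_zero, add_zero]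
          rw [← hb2]
          exact AddSubgroup.zsmul_mem _ hw _
        exact hnotin a hxa
      rcases Finset.mem_insert.1 hi with rfl | hi'
      · exact hfinj i (g i) h0
      · rw [h0, zero_add] at hsum
        exact ih g hsum i hi'
  -- assemble the direct sum embedding
  set Φ : (⨁ i : ℕ, ZMod (p i)) →+ G := DirectSum.toAddMonoid f with hΦdef
  have hΦ : ∀ d : ⨁ i : ℕ, ZMod (p i), Φ d = ∑ i ∈ d.support, f i (d i) := by
    intro d
    rw [show Φ d = DFinsupp.sumAddHom f d from rfl, DFinsupp.sumAddHom_apply]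
    rfl
  have hΦinj : Function.Injective Φ := by
    refine (injective_iff_map_eq_zero Φ).2 fun d hd => ?_
    rw [hΦ] at hd
    have hz := key2 d.support (fun i => d i) hd
    refine DFinsupp.ext fun i => ?_
    by_cases hmem : i ∈ d.support
    · simpa using hz i hmem
    · simpa using DFinsupp.notMem_support_iff.1 hmem
  exact ⟨p, hprime, Φ.range, ⟨(AddMonoidHom.ofInjective hΦinj).symm⟩⟩
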